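/- Let d ≥ 1, 1 < p ≤ ∞, T > 0, and f, g ∈ L^∞([0,T], L²(ℝ^d;ℂ)). For 0 ≤ t ≤ T write L_t := L_{[0,t]}(f,g), where elements of L^{p'}([0,t']) are extended by zero to [0,t] for t' ≤ t and W ∈ M^p([0,T]) is restricted to subintervals accordingly. Then there is a constant C, depending only on p, such that for all W ∈ M^p([0,T]) and all 0 ≤ t' ≤ t ≤ T: |⟨W, L_t W⟩ − ⟨W, L_{t'} W⟩| ≤ C (t − t')^{1−1/p} ‖f‖_{L^∞L²} ‖g‖_{L^∞L²} ‖W‖²_{M^p([0,T])} · max(1, T)^{2−2/p}. In particular, t ↦ ⟨W, L_t W⟩ is (1−1/p)-Hölder continuous on [0,T], uniformly for ‖W‖_{M^p} bounded. -/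

import Mathlib

open MeasureTheory Real Set
open scoped ENNReal ComplexConjugate

noncomputable section

abbrev Rd (d : ℕ) := EuclideanSpace ℝ (Fin d)
abbrev Ltwo (d : ℕ) := MeasureTheory.Lp ℂ 2 (volume : MeasureTheory.Measure (Rd d))
abbrev LoneR (d : ℕ) := MeasureTheory.Lp ℝ 1 (volume : MeasureTheory.Measure (Rd d))
abbrev LoneC (d : ℕ) := MeasureTheory.Lp ℂ 1 (volume : MeasureTheory.Measure (Rd d))
abbrev timeMeasure (a b : ℝ) : MeasureTheory.Measure ℝ := volume.restrict (Set.Icc a b)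

/-- `M^p([a,b])`: the dual of the Bochner space `L^{p'}([a,b], L¹(ℝ^d;ℝ))`,
where `q = p'` is the conjugate exponent of `p`. -/
abbrev Mp (d : ℕ) (q : ℝ≥0∞) [Fact (1 ≤ q)] (a b : ℝ) :=
  StrongDual ℝ (MeasureTheory.Lp (LoneR d) q (timeMeasure a b))

/-- `U` is the free Schrödinger group `t ↦ e^{itΔ}` on `L²(ℝ^d;ℂ)`: it is characterized as
the family of unitaries acting on (L²-classes of) Schwartz functions as the Fourier multiplier
with symbol `e^{-it|ξ|²}` (in Mathlib's `2π`-convention for the Fourier transform, the symbol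
reads `e^{-4π²it‖ξ‖²}`). -/
def IsSchrodingerGroup (d : ℕ) (U : ℝ → (Ltwo d ≃ₗᵢ[ℂ] Ltwo d)) : Prop :=
  ∀ (t : ℝ) (φ ψ : SchwartzMap (Rd d) ℂ),
    (∀ ξ : Rd d, FourierTransform.fourierCLE ℂ (SchwartzMap (Rd d) ℂ) ψ ξ
        = Complex.exp (-Complex.I * (t : ℂ) * ((4 * π ^ 2 * ‖ξ‖ ^ 2 : ℝ) : ℂ))
          * FourierTransform.fourierCLE ℂ (SchwartzMap (Rd d) ℂ) φ ξ) →
    ∀ (u v : Ltwo d), (⇑u =ᵐ[volume] ⇑φ) → (⇑v =ᵐ[volume] ⇑ψ) → U t u = v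

/-- `w = ∫_J f(s) V(ds)`, defined by duality:
`⟪g, w⟫ = ⟨V, s ↦ 1_J(s) · conj(g)·f(s)⟩` for every `g ∈ L²`, the (real) functional `V`
being applied separately to the real and imaginary parts. -/
def IsDualityIntegralOn (d : ℕ) (q : ℝ≥0∞) [Fact (1 ≤ q)] (a b : ℝ)
    (V : Mp d q a b) (J : Set ℝ) (f : ℝ → Ltwo d) (w : Ltwo d) : Prop :=
  ∀ g : Ltwo d, ∃ Fre Fim : MeasureTheory.Lp (LoneR d) q (timeMeasure a b),
    (∀ᵐ s ∂(timeMeasure a b), ⇑(Fre s)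
        =ᵐ[volume] fun x => J.indicator
          (fun s' => ((starRingEnd ℂ) (g x) * (f s' : Rd d → ℂ) x).re) s) ∧
    (∀ᵐ s ∂(timeMeasure a b), ⇑(Fim s)
        =ᵐ[volume] fun x => J.indicator
          (fun s' => ((starRingEnd ℂ) (g x) * (f s' : Rd d → ℂ) x).im) s) ∧
    (inner ℂ g w : ℂ) = ((V Fre : ℝ) : ℂ) + Complex.I * ((V Fim : ℝ) : ℂ)

/-- `ψ` is a mild solution of the Schrödinger equation with potential `V ∈ M^p([a,b])`
and initial condition `ψ₀`:  `ψ(t) = e^{itΔ}ψ₀ + ∫₀ᵗ e^{i(t-s)Δ} ψ(s) V(ds)` for all `t`,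
the integral being understood by duality and oriented (`∫₀ᵗ = -∫ₜ⁰` for `t < 0`). -/
def IsMildSolution (d : ℕ) (U : ℝ → (Ltwo d ≃ₗᵢ[ℂ] Ltwo d)) (q : ℝ≥0∞) [Fact (1 ≤ q)]
    (a b : ℝ) (hab : a ≤ b) (V : Mp d q a b) (ψ₀ : Ltwo d)
    (ψ : C(Set.Icc a b, Ltwo d)) : Prop :=
  ∀ t : Set.Icc a b, ∃ w : Ltwo d,
    IsDualityIntegralOn d q a b V (Set.uIcc 0 (t : ℝ))
      (fun s => U ((t : ℝ) - s) (Set.IccExtend hab ψ s)) w ∧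
    ψ t = U (t : ℝ) ψ₀ + (if (0:ℝ) ≤ (t : ℝ) then (1 : ℂ) else -1) • w

/-- `F = L_I(f,g) V`, i.e. `F(s) = conj(g(s)) · ∫_I e^{i(s-s')Δ} f(s') V(ds')` for a.e. `s ∈ I`,
`I = [a,b]`. -/
def IsLopValue (d : ℕ) (U : ℝ → (Ltwo d ≃ₗᵢ[ℂ] Ltwo d)) (q : ℝ≥0∞) [Fact (1 ≤ q)]
    (a b : ℝ) (f g : ℝ → Ltwo d) (V : Mp d q a b)
    (F : MeasureTheory.Lp (LoneC d) q (timeMeasure a b)) : Prop :=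
  ∀ᵐ s ∂(timeMeasure a b), ∃ w : Ltwo d,
    IsDualityIntegralOn d q a b V (Set.Icc a b) (fun s' => U (s - s') (f s')) w ∧
    ⇑(F s) =ᵐ[volume]
      fun x => (starRingEnd ℂ) ((g s : Rd d → ℂ) x) * (w : Rd d → ℂ) x

/-- The squared modulus `|u|² ∈ L¹(ℝ^d;ℝ)` of `u ∈ L²(ℝ^d;ℂ)`. -/
def sqModulus (d : ℕ) (u : Ltwo d) : LoneR d :=
  MeasureTheory.MemLp.toLp _
    ((MeasureTheory.Lp.memLp u).norm_rpow (by norm_num) (by norm_num))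

/-- A potential in `M^p_loc(ℝ)`: a compatible family of elements of `M^p(I)` for all compact
intervals `I = [a,b]`, i.e. the functional on a larger interval agrees with the one on a smaller
interval when applied to (test functions vanishing outside the smaller interval). -/
structure MlocFamily (d : ℕ) (q : ℝ≥0∞) [Fact (1 ≤ q)] where
  toFun : ∀ a b : ℝ, Mp d q a b
  compat : ∀ (a b a' b' : ℝ), a' ≤ a → b ≤ b' →
    ∀ (F : MeasureTheory.Lp (LoneR d) q (timeMeasure a b))
      (F' : MeasureTheory.Lp (LoneR d) q (timeMeasure a' b')),
      (∀ᵐ s ∂(volume : MeasureTheory.Measure ℝ),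
          (s ∈ Set.Icc a b → F s = F' s) ∧
          (s ∈ Set.Icc a' b' ∧ s ∉ Set.Icc a b → F' s = 0)) →
      toFun a b F = toFun a' b' F'


/-- `c = ⟨W, L_t W⟩`, where `L_t = L_{[0,t]}(f,g)`: the quadratic pairing of
`W ∈ M^p([0,T])` (restricted to `[0,t]`) with `L_{[0,t]}(f,g)W`, namely
`c = W(Re F) + i W(Im F)` where `F(s) = 1_{[0,t]}(s) conj(g(s)) ∫_{[0,t]} e^{i(s-s')Δ} f(s') W(ds')`. -/
def IsLPairingValue (d : ℕ) (U : ℝ → (Ltwo d ≃ₗᵢ[ℂ] Ltwo d)) (q : ℝ≥0∞) [Fact (1 ≤ q)]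
    (T : ℝ) (f g : ℝ → Ltwo d) (W : Mp d q 0 T) (t : ℝ) (c : ℂ) : Prop :=
  ∃ Fre Fim : MeasureTheory.Lp (LoneR d) q (timeMeasure 0 T),
    (∀ᵐ s ∂(timeMeasure 0 T), ∃ w : Ltwo d,
      IsDualityIntegralOn d q 0 T W (Set.Icc 0 t) (fun s' => U (s - s') (f s')) w ∧
      ⇑(Fre s) =ᵐ[volume] (fun x => (Set.Icc (0:ℝ) t).indicator
          (fun _ => ((starRingEnd ℂ) ((g s : Rd d → ℂ) x) * (w : Rd d → ℂ) x).re) s) ∧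
      ⇑(Fim s) =ᵐ[volume] (fun x => (Set.Icc (0:ℝ) t).indicator
          (fun _ => ((starRingEnd ℂ) ((g s : Rd d → ℂ) x) * (w : Rd d → ℂ) x).im) s)) ∧
    c = ((W Fre : ℝ) : ℂ) + Complex.I * ((W Fim : ℝ) : ℂ)

section AuxStatement15

variable {d : ℕ}

/-- Cauchy–Schwarz: an `L¹` function dominated pointwise by a product of two `L²`
functions has `L¹` norm at most the product of the `L²` norms. -/
lemma aux15_L1_norm_le (u v : Ltwo d) (F : LoneR d)
    (h : ∀ᵐ x ∂(volume : Measure (Rd d)), ‖F x‖ ≤ ‖u x‖ * ‖v x‖) :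
    ‖F‖ ≤ ‖u‖ * ‖v‖ := by
  have key : eLpNorm (⇑F) 1 volume ≤ eLpNorm (⇑u) 2 volume * eLpNorm (⇑v) 2 volume := by
    rw [eLpNorm_one_eq_lintegral_enorm]
    have h1 : (∫⁻ x, (‖F x‖₊ : ℝ≥0∞) ∂volume)
        ≤ ∫⁻ x, ((fun x => (‖u x‖₊ : ℝ≥0∞)) * fun x => (‖v x‖₊ : ℝ≥0∞)) x ∂volume := by
      refine lintegral_mono_ae (h.mono fun x hx => ?_)
      simp only [Pi.mul_apply]
      exact_mod_cast hx
    refine h1.trans ?_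
    have h2 : Real.HolderConjugate 2 2 := Real.HolderConjugate.two_two
    refine (ENNReal.lintegral_mul_le_Lp_mul_Lq volume h2
      (Lp.aestronglyMeasurable u).enorm (Lp.aestronglyMeasurable v).enorm).trans_eq ?_
    rw [eLpNorm_eq_lintegral_rpow_enorm_toReal two_ne_zero ENNReal.ofNat_ne_top,
      eLpNorm_eq_lintegral_rpow_enorm_toReal two_ne_zero ENNReal.ofNat_ne_top]
    norm_num
  calc ‖F‖ = (eLpNorm (⇑F) 1 volume).toReal := Lp.norm_def F
    _ ≤ (eLpNorm (⇑u) 2 volume * eLpNorm (⇑v) 2 volume).toReal :=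
        ENNReal.toReal_mono (ENNReal.mul_ne_top (Lp.eLpNorm_ne_top u)
          (Lp.eLpNorm_ne_top v)) key
    _ = ‖u‖ * ‖v‖ := by rw [ENNReal.toReal_mul, Lp.norm_def, Lp.norm_def]

lemma aux15_norm_eq_zero {E : Type*} [NormedAddCommGroup E] {α : Type*}
    [MeasurableSpace α] {μ : Measure α} {r : ℝ≥0∞} [Fact (1 ≤ r)]
    (F : Lp E r μ) (h : ⇑F =ᵐ[μ] 0) : ‖F‖ = 0 := by
  rw [Lp.norm_def, eLpNorm_congr_ae h, eLpNorm_zero, ENNReal.toReal_zero]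

/-- `L^∞` functions are a.e. bounded by their norm. -/
lemma aux15_Linfty_ae_le {E : Type*} [NormedAddCommGroup E] {α : Type*}
    [MeasurableSpace α] {μ : Measure α} (f : Lp E ∞ μ) :
    ∀ᵐ x ∂μ, ‖f x‖ ≤ ‖f‖ := by
  filter_upwards [ae_le_eLpNormEssSup (f := ⇑f) (μ := μ)] with x hx
  rw [Lp.norm_def, eLpNorm_exponent_top]
  have hne : eLpNormEssSup (⇑f) μ ≠ ∞ := by
    have := Lp.eLpNorm_ne_top f
    rwa [eLpNorm_exponent_top] at this
  calc ‖f x‖ = ((‖f x‖₊ : ℝ≥0∞)).toReal := by simp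
    _ ≤ (eLpNormEssSup (⇑f) μ).toReal := ENNReal.toReal_mono hne hx

/-- `L^q` norm bound for a function a.e. dominated by a sum of two indicator constants. -/
lemma aux15_Lq_norm_le {q : ℝ≥0∞} [Fact (1 ≤ q)] (hq : q ≠ ∞) {T : ℝ}
    (F : Lp (LoneR d) q (timeMeasure 0 T))
    {A B : Set ℝ} (hA : MeasurableSet A) (hB : MeasurableSet B)
    {a b : ℝ} (ha : 0 ≤ a) (hb : 0 ≤ b)
    (h : ∀ᵐ s ∂(timeMeasure 0 T),
      ‖F s‖ ≤ A.indicator (fun _ => a) s + B.indicator (fun _ => b) s) :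
    ‖F‖ ≤ a * ((timeMeasure 0 T) A).toReal ^ (1 / q.toReal)
        + b * ((timeMeasure 0 T) B).toReal ^ (1 / q.toReal) := by
  have hq0 : q ≠ 0 := (lt_of_lt_of_le zero_lt_one (Fact.out : 1 ≤ q)).ne'
  have hμfin : ∀ S : Set ℝ, timeMeasure 0 T S ≠ ∞ := by
    intro S
    refine ((measure_mono (Set.subset_univ S)).trans_lt ?_).ne
    rw [timeMeasure, Measure.restrict_apply_univ, Real.volume_Icc]
    exact ENNReal.ofReal_lt_top
  have hbound : eLpNorm (⇑F) q (timeMeasure 0 T) ≤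
      (‖a‖₊ : ℝ≥0∞) * timeMeasure 0 T A ^ (1 / q.toReal)
      + (‖b‖₊ : ℝ≥0∞) * timeMeasure 0 T B ^ (1 / q.toReal) := by
    have h1 : eLpNorm (⇑F) q (timeMeasure 0 T) ≤ eLpNorm
        (fun s => A.indicator (fun _ => a) s + B.indicator (fun _ => b) s) q
        (timeMeasure 0 T) := by
      refine eLpNorm_mono_ae (h.mono fun s hs => hs.trans ?_)
      rw [Real.norm_eq_abs]
      exact le_abs_self _
    refine h1.trans ?_
    refine (eLpNorm_add_le ((measurable_const.indicator hA).aestronglyMeasurable)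
      ((measurable_const.indicator hB).aestronglyMeasurable) (Fact.out : 1 ≤ q)).trans ?_
    rw [eLpNorm_indicator_const hA hq0 hq, eLpNorm_indicator_const hB hq0 hq]
    exact le_rfl
  have hfin1 : (‖a‖₊ : ℝ≥0∞) * timeMeasure 0 T A ^ (1 / q.toReal) ≠ ∞ :=
    ENNReal.mul_ne_top ENNReal.coe_ne_top
      (ENNReal.rpow_ne_top_of_nonneg (by positivity) (hμfin A))
  have hfin2 : (‖b‖₊ : ℝ≥0∞) * timeMeasure 0 T B ^ (1 / q.toReal) ≠ ∞ :=
    ENNReal.mul_ne_top ENNReal.coe_ne_top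
      (ENNReal.rpow_ne_top_of_nonneg (by positivity) (hμfin B))
  calc ‖F‖ = (eLpNorm (⇑F) q (timeMeasure 0 T)).toReal := Lp.norm_def F
    _ ≤ ((‖a‖₊ : ℝ≥0∞) * timeMeasure 0 T A ^ (1 / q.toReal)
          + (‖b‖₊ : ℝ≥0∞) * timeMeasure 0 T B ^ (1 / q.toReal)).toReal :=
        ENNReal.toReal_mono (by exact ENNReal.add_ne_top.mpr ⟨hfin1, hfin2⟩) hbound
    _ = a * (timeMeasure 0 T A).toReal ^ (1 / q.toReal)
        + b * (timeMeasure 0 T B).toReal ^ (1 / q.toReal) := by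
        rw [ENNReal.toReal_add hfin1 hfin2, ENNReal.toReal_mul, ENNReal.toReal_mul,
          ENNReal.toReal_rpow, ENNReal.toReal_rpow]
        simp [Real.norm_of_nonneg ha, Real.norm_of_nonneg hb]

lemma aux15_dualityIntegral_empty {q : ℝ≥0∞} [Fact (1 ≤ q)] {a b : ℝ}
    (V : Mp d q a b) (h : ℝ → Ltwo d) :
    IsDualityIntegralOn d q a b V ∅ h 0 := by
  intro g
  refine ⟨0, 0, ?_, ?_, ?_⟩
  · filter_upwards [Lp.coeFn_zero (LoneR d) q (timeMeasure a b)] with s hs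
    rw [hs]
    filter_upwards [Lp.coeFn_zero ℝ 1 (volume : Measure (Rd d))] with x hx
    simpa using hx
  · filter_upwards [Lp.coeFn_zero (LoneR d) q (timeMeasure a b)] with s hs
    rw [hs]
    filter_upwards [Lp.coeFn_zero ℝ 1 (volume : Measure (Rd d))] with x hx
    simpa using hx
  · simp

/-- Key duality estimate: if `w, w'` are duality integrals of the same integrand over
`J ⊇ J'`, then `‖w - w'‖ ≤ ‖V‖ · M · μ(J \ J')^{1/q}`. -/
lemma aux15_dual_diff_bound {q : ℝ≥0∞} [Fact (1 ≤ q)] (hq : q ≠ ∞) {T : ℝ}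
    (V : Mp d q 0 T) {J J' : Set ℝ} (hJ'J : J' ⊆ J)
    (hJmeas : MeasurableSet (J \ J'))
    {h : ℝ → Ltwo d} {M : ℝ} (hM : 0 ≤ M)
    (hh : ∀ᵐ s' ∂(timeMeasure 0 T), ‖h s'‖ ≤ M)
    {w w' : Ltwo d}
    (hw : IsDualityIntegralOn d q 0 T V J h w)
    (hw' : IsDualityIntegralOn d q 0 T V J' h w') :
    ‖w - w'‖ ≤ ‖V‖ * M * ((timeMeasure 0 T) (J \ J')).toReal ^ (1 / q.toReal) := by
  set μ := timeMeasure 0 T with hμdef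
  set g : Ltwo d := w - w' with hgdef
  obtain ⟨Are, Aim, hAre, hAim, hAinner⟩ := hw g
  obtain ⟨Bre, Bim, hBre, hBim, hBinner⟩ := hw' g
  have h1 : ((‖g‖ ^ 2 : ℝ) : ℂ)
      = (((V Are : ℝ) : ℂ) + Complex.I * ((V Aim : ℝ) : ℂ))
        - (((V Bre : ℝ) : ℂ) + Complex.I * ((V Bim : ℝ) : ℂ)) := by
    rw [← hAinner, ← hBinner, ← inner_sub_right, ← hgdef, inner_self_eq_norm_sq_to_K]
    norm_num
  have hre : ‖g‖ ^ 2 = V Are - V Bre := by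
    have h2 := congrArg Complex.re h1
    simp only [Complex.ofReal_re, Complex.sub_re, Complex.add_re, Complex.mul_re,
      Complex.I_re, Complex.I_im, Complex.ofReal_im, zero_mul, one_mul, mul_zero,
      sub_zero, zero_sub, add_zero, neg_zero, zero_add] at h2
    linarith
  -- a.e. bound on `Are - Bre`
  have hABae : ∀ᵐ s' ∂μ, ‖(⇑(Are - Bre)) s'‖ ≤
      (J \ J').indicator (fun _ => ‖g‖ * M) s'
      + (∅ : Set ℝ).indicator (fun _ => (0:ℝ)) s' := by
    filter_upwards [Lp.coeFn_sub Are Bre, hAre, hBre, hh] with s' hsub hA hB hfb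
    rw [hsub, Pi.sub_apply]
    simp only [Set.indicator_empty, Pi.zero_apply, add_zero]
    by_cases hmem : s' ∈ J \ J'
    · have hX : ⇑(Are s' - Bre s') =ᵐ[volume]
          fun x => ((starRingEnd ℂ) (g x) * ((h s' : Rd d → ℂ)) x).re := by
        filter_upwards [Lp.coeFn_sub (Are s') (Bre s'), hA, hB] with x hx hAx hBx
        rw [hx, Pi.sub_apply, hAx, hBx, Set.indicator_of_mem hmem.1,
          Set.indicator_of_notMem hmem.2, sub_zero]
      have hb : ‖Are s' - Bre s'‖ ≤ ‖g‖ * ‖h s'‖ := by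
        refine aux15_L1_norm_le g (h s') _ ?_
        filter_upwards [hX] with x hx
        rw [hx, Real.norm_eq_abs]
        refine (Complex.abs_re_le_norm _).trans ?_
        rw [norm_mul, Complex.norm_conj]
      rw [Set.indicator_of_mem hmem]
      exact hb.trans (mul_le_mul_of_nonneg_left hfb (norm_nonneg g))
    · have hXz : ⇑(Are s' - Bre s') =ᵐ[volume] 0 := by
        filter_upwards [Lp.coeFn_sub (Are s') (Bre s'), hA, hB] with x hx hAx hBx
        rw [hx, Pi.sub_apply, hAx, hBx]
        have : s' ∈ J ↔ s' ∈ J' := by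
          constructor
          · intro hJs
            by_contra hns
            exact hmem ⟨hJs, hns⟩
          · exact fun hs => hJ'J hs
        by_cases hsJ' : s' ∈ J'
        · rw [Set.indicator_of_mem (this.mpr hsJ'), Set.indicator_of_mem hsJ',
            sub_self, Pi.zero_apply]
        · rw [Set.indicator_of_notMem (fun hsJ => hsJ' (this.mp hsJ)),
            Set.indicator_of_notMem hsJ', sub_self, Pi.zero_apply]
      rw [aux15_norm_eq_zero _ hXz, Set.indicator_of_notMem hmem]
  have hABnorm : ‖Are - Bre‖ ≤ ‖g‖ * M * (μ (J \ J')).toReal ^ (1 / q.toReal) := by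
    have := aux15_Lq_norm_le hq (Are - Bre) hJmeas MeasurableSet.empty
      (mul_nonneg (norm_nonneg g) hM) le_rfl hABae
    simpa only [zero_mul, add_zero] using this
  have hsq : ‖g‖ ^ 2 ≤ ‖V‖ * (‖g‖ * M * (μ (J \ J')).toReal ^ (1 / q.toReal)) := by
    rw [hre, ← map_sub]
    calc V (Are - Bre) ≤ |V (Are - Bre)| := le_abs_self _
      _ = ‖V (Are - Bre)‖ := (Real.norm_eq_abs _).symm
      _ ≤ ‖V‖ * ‖Are - Bre‖ := V.le_opNorm _
      _ ≤ ‖V‖ * (‖g‖ * M * (μ (J \ J')).toReal ^ (1 / q.toReal)) :=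
          mul_le_mul_of_nonneg_left hABnorm (norm_nonneg V)
  rcases (norm_nonneg g).eq_or_lt with h0 | h0
  · rw [hgdef] at h0
    rw [← h0]
    have : (0:ℝ) ≤ (μ (J \ J')).toReal ^ (1 / q.toReal) := by positivity
    positivity
  · nlinarith [hsq, h0]

set_option maxHeartbeats 1000000 in
/-- The main per-component estimate for the Hölder bound. -/
lemma aux15_component_bound {q : ℝ≥0∞} [Fact (1 ≤ q)] (hq : q ≠ ∞)
    {T t t' : ℝ} (h0t' : 0 ≤ t') (ht't : t' ≤ t) (htT : t ≤ T)
    (U : ℝ → (Ltwo d ≃ₗᵢ[ℂ] Ltwo d))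
    (f g : Lp (Ltwo d) ∞ (timeMeasure 0 T)) (W : Mp d q 0 T)
    (σ : ℂ → ℝ) (hσ : ∀ z, |σ z| ≤ ‖z‖)
    (hσsub : ∀ z₁ z₂, σ (z₁ - z₂) = σ z₁ - σ z₂)
    (F F' : Lp (LoneR d) q (timeMeasure 0 T))
    (hF : ∀ᵐ s ∂(timeMeasure 0 T), ∃ w : Ltwo d,
      IsDualityIntegralOn d q 0 T W (Set.Icc 0 t) (fun s' => U (s - s') (f s')) w ∧
      ⇑(F s) =ᵐ[volume] (fun x => (Set.Icc (0:ℝ) t).indicator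
        (fun _ => σ ((starRingEnd ℂ) ((g s : Rd d → ℂ) x) * (w : Rd d → ℂ) x)) s))
    (hF' : ∀ᵐ s ∂(timeMeasure 0 T), ∃ w : Ltwo d,
      IsDualityIntegralOn d q 0 T W (Set.Icc 0 t') (fun s' => U (s - s') (f s')) w ∧
      ⇑(F' s) =ᵐ[volume] (fun x => (Set.Icc (0:ℝ) t').indicator
        (fun _ => σ ((starRingEnd ℂ) ((g s : Rd d → ℂ) x) * (w : Rd d → ℂ) x)) s)) :
    ‖F - F'‖ ≤ 2 * ‖g‖ * ‖W‖ * ‖f‖ * (t - t') ^ (1 / q.toReal) * T ^ (1 / q.toReal) := by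
  have hT : 0 ≤ T := h0t'.trans (ht't.trans htT)
  have h0t : 0 ≤ t := h0t'.trans ht't
  have henn : 0 ≤ 1 / q.toReal := by positivity
  set e : ℝ := 1 / q.toReal with hedef
  -- measures of the relevant sets
  have hμ_of_subset : ∀ S : Set ℝ, MeasurableSet S → S ⊆ Set.Icc 0 T → timeMeasure 0 T S = volume S := by
    intro S hSm hSsub
    rw [timeMeasure, Measure.restrict_apply hSm, Set.inter_eq_left.mpr hSsub]
  have hμIcc' : (timeMeasure 0 T (Set.Icc 0 t')).toReal = t' := by
    rw [hμ_of_subset _ measurableSet_Icc (Set.Icc_subset_Icc le_rfl (ht't.trans htT)),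
      Real.volume_Icc, sub_zero, ENNReal.toReal_ofReal (by linarith)]
  have hμIcc : (timeMeasure 0 T (Set.Icc 0 t)).toReal = t := by
    rw [hμ_of_subset _ measurableSet_Icc (Set.Icc_subset_Icc le_rfl htT),
      Real.volume_Icc, sub_zero, ENNReal.toReal_ofReal (by linarith)]
  have hIocsub : Set.Ioc t' t ⊆ Set.Icc 0 T :=
    fun x hx => ⟨h0t'.trans hx.1.le, hx.2.trans htT⟩
  have hμIoc : (timeMeasure 0 T (Set.Ioc t' t)).toReal = t - t' := by
    rw [hμ_of_subset _ measurableSet_Ioc hIocsub, Real.volume_Ioc,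
      ENNReal.toReal_ofReal (by linarith)]
  have hsetdiff : Set.Icc (0:ℝ) t \ Set.Icc 0 t' = Set.Ioc t' t := by
    ext x
    simp only [Set.mem_diff, Set.mem_Icc, Set.mem_Ioc, not_and, not_le]
    constructor
    · rintro ⟨⟨hx0, hxt⟩, hlt⟩
      exact ⟨hlt hx0, hxt⟩
    · rintro ⟨h1, h2⟩
      exact ⟨⟨h0t'.trans h1.le, h2⟩, fun _ => h1⟩
  -- a.e. bound on `f`
  have hfb : ∀ᵐ s' ∂(timeMeasure 0 T), ‖f s'‖ ≤ ‖f‖ := aux15_Linfty_ae_le f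
  have hgb : ∀ᵐ s ∂(timeMeasure 0 T), ‖g s‖ ≤ ‖g‖ := aux15_Linfty_ae_le g
  set a : ℝ := ‖g‖ * (‖W‖ * ‖f‖ * (t - t') ^ e) with hadef
  set b : ℝ := ‖g‖ * (‖W‖ * ‖f‖ * T ^ e) with hbdef
  have ht't0 : (0:ℝ) ≤ t - t' := by linarith
  have ha : 0 ≤ a := by
    rw [hadef]
    have : (0:ℝ) ≤ (t - t') ^ e := Real.rpow_nonneg ht't0 e
    positivity
  have hb : 0 ≤ b := by
    rw [hbdef]
    have : (0:ℝ) ≤ T ^ e := Real.rpow_nonneg hT e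
    positivity
  have hae : ∀ᵐ s ∂(timeMeasure 0 T), ‖(⇑(F - F')) s‖ ≤
      (Set.Icc 0 t').indicator (fun _ => a) s + (Set.Ioc t' t).indicator (fun _ => b) s := by
    filter_upwards [hF, hF', Lp.coeFn_sub F F', hgb] with s hFs hF's hsub hgs
    obtain ⟨w, hw, hws⟩ := hFs
    obtain ⟨w', hw', hw's⟩ := hF's
    -- the two w-norm estimates
    have hUfb : ∀ᵐ s' ∂(timeMeasure 0 T), ‖U (s - s') (f s')‖ ≤ ‖f‖ := by
      filter_upwards [hfb] with s' hs'
      rwa [LinearIsometryEquiv.norm_map]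
    have hwd : ‖w - w'‖ ≤ ‖W‖ * ‖f‖ * (t - t') ^ e := by
      have hmeas : MeasurableSet (Set.Icc (0:ℝ) t \ Set.Icc 0 t') :=
        measurableSet_Icc.diff measurableSet_Icc
      have := aux15_dual_diff_bound hq W
        (Set.Icc_subset_Icc le_rfl ht't) hmeas (norm_nonneg f) hUfb hw hw'
      rw [hsetdiff] at this
      calc ‖w - w'‖ ≤ ‖W‖ * ‖f‖ * (timeMeasure 0 T (Set.Ioc t' t)).toReal ^ e := this
        _ = ‖W‖ * ‖f‖ * (t - t') ^ e := by rw [hμIoc]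
    have hw0 : ‖w‖ ≤ ‖W‖ * ‖f‖ * T ^ e := by
      have hmeas : MeasurableSet (Set.Icc (0:ℝ) t \ (∅ : Set ℝ)) := by
        rw [Set.diff_empty]; exact measurableSet_Icc
      have := aux15_dual_diff_bound hq W (Set.empty_subset _) hmeas (norm_nonneg f) hUfb hw
        (aux15_dualityIntegral_empty W _)
      rw [sub_zero, Set.diff_empty] at this
      rw [hμIcc] at this
      refine this.trans ?_
      have htT' : t ^ e ≤ T ^ e := Real.rpow_le_rpow h0t htT henn
      have : (0:ℝ) ≤ ‖W‖ * ‖f‖ := by positivity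
      exact mul_le_mul_of_nonneg_left htT' this
    rw [hsub, Pi.sub_apply]
    by_cases hs1 : s ∈ Set.Icc (0:ℝ) t'
    · -- difference of the two integrals
      have hsIcc : s ∈ Set.Icc (0:ℝ) t := Set.Icc_subset_Icc le_rfl ht't hs1
      have hX : ⇑(F s - F' s) =ᵐ[volume]
          fun x => σ ((starRingEnd ℂ) ((g s : Rd d → ℂ) x) * ((w - w' : Ltwo d) : Rd d → ℂ) x) := by
        filter_upwards [Lp.coeFn_sub (F s) (F' s), hws, hw's, Lp.coeFn_sub w w'] with x hx h1 h2 h3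
        rw [hx, Pi.sub_apply, h1, h2, Set.indicator_of_mem hsIcc, Set.indicator_of_mem hs1]
        rw [← hσsub, ← mul_sub]
        have h3' : (w : Rd d → ℂ) x - (w' : Rd d → ℂ) x = ((w - w' : Ltwo d) : Rd d → ℂ) x := by
          rw [h3, Pi.sub_apply]
        rw [h3']
      have hXb : ‖F s - F' s‖ ≤ ‖g s‖ * ‖w - w'‖ := by
        refine aux15_L1_norm_le (g s) (w - w') _ ?_
        filter_upwards [hX] with x hx
        rw [hx, Real.norm_eq_abs]
        refine (hσ _).trans ?_
        rw [norm_mul, Complex.norm_conj]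
      have : ‖F s - F' s‖ ≤ a := by
        rw [hadef]
        exact hXb.trans (mul_le_mul hgs hwd (norm_nonneg _) (norm_nonneg g))
      rw [Set.indicator_of_mem hs1, Set.indicator_of_notMem
        (fun hmem => absurd hs1.2 (not_le.mpr hmem.1))]
      linarith
    · by_cases hs2 : s ∈ Set.Icc (0:ℝ) t
      · have hsIoc : s ∈ Set.Ioc t' t := by
          rcases hs2 with ⟨hs0, hst⟩
          refine ⟨?_, hst⟩
          by_contra hle
          exact hs1 ⟨hs0, not_lt.mp hle⟩
        have hX : ⇑(F s - F' s) =ᵐ[volume]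
            fun x => σ ((starRingEnd ℂ) ((g s : Rd d → ℂ) x) * (w : Rd d → ℂ) x) := by
          filter_upwards [Lp.coeFn_sub (F s) (F' s), hws, hw's] with x hx h1 h2
          rw [hx, Pi.sub_apply, h1, h2, Set.indicator_of_mem hs2,
            Set.indicator_of_notMem hs1, sub_zero]
        have hXb : ‖F s - F' s‖ ≤ ‖g s‖ * ‖w‖ := by
          refine aux15_L1_norm_le (g s) w _ ?_
          filter_upwards [hX] with x hx
          rw [hx, Real.norm_eq_abs]
          refine (hσ _).trans ?_
          rw [norm_mul, Complex.norm_conj]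
        have : ‖F s - F' s‖ ≤ b := by
          rw [hbdef]
          exact hXb.trans (mul_le_mul hgs hw0 (norm_nonneg _) (norm_nonneg g))
        rw [Set.indicator_of_notMem hs1, Set.indicator_of_mem hsIoc]
        linarith
      · have hX : ⇑(F s - F' s) =ᵐ[volume] 0 := by
          filter_upwards [Lp.coeFn_sub (F s) (F' s), hws, hw's] with x hx h1 h2
          rw [hx, Pi.sub_apply, h1, h2, Set.indicator_of_notMem hs2,
            Set.indicator_of_notMem hs1, sub_zero, Pi.zero_apply]
        rw [aux15_norm_eq_zero _ hX]
        have h1 : (0:ℝ) ≤ (Set.Icc 0 t').indicator (fun _ => a) s :=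
          Set.indicator_nonneg (fun _ _ => ha) s
        have h2 : (0:ℝ) ≤ (Set.Ioc t' t).indicator (fun _ => b) s :=
          Set.indicator_nonneg (fun _ _ => hb) s
        linarith
  have hnorm := aux15_Lq_norm_le hq (F - F') measurableSet_Icc measurableSet_Ioc ha hb hae
  rw [hμIcc', hμIoc] at hnorm
  have ht'T : t' ^ e ≤ T ^ e := Real.rpow_le_rpow h0t' (ht't.trans htT) henn
  calc ‖F - F'‖ ≤ a * t' ^ e + b * (t - t') ^ e := hnorm
    _ ≤ a * T ^ e + b * (t - t') ^ e := by
        have := mul_le_mul_of_nonneg_left ht'T ha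
        linarith
    _ = 2 * ‖g‖ * ‖W‖ * ‖f‖ * (t - t') ^ e * T ^ e := by
        rw [hadef, hbdef]; ring

end AuxStatement15

/-- Uniform Hölder continuity in `t` of the quadratic pairing
`t ↦ ⟨W, L_t W⟩`, `L_t = L_{[0,t]}(f,g)`: there is `C = C(p)` with
`|⟨W,L_t W⟩ - ⟨W,L_{t'} W⟩| ≤ C (t-t')^{1-1/p} ‖f‖_{L^∞L²} ‖g‖_{L^∞L²} ‖W‖² max(1,T)^{2-2/p}`
for all `0 ≤ t' ≤ t ≤ T`. -/
theorem statement15 (p q : ℝ≥0∞) (hp : 1 < p) (hpq : 1 / p + 1 / q = 1) [Fact (1 ≤ q)] :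
    ∃ C : ℝ, ∀ (d : ℕ), 1 ≤ d →
      ∀ (U : ℝ → (Ltwo d ≃ₗᵢ[ℂ] Ltwo d)), IsSchrodingerGroup d U →
      ∀ (T : ℝ), 0 < T →
      ∀ (f g : MeasureTheory.Lp (Ltwo d) ∞ (timeMeasure 0 T)) (W : Mp d q 0 T)
        (t t' : ℝ) (c c' : ℂ), 0 ≤ t' → t' ≤ t → t ≤ T →
        IsLPairingValue d U q T (⇑f) (⇑g) W t c →
        IsLPairingValue d U q T (⇑f) (⇑g) W t' c' →
        ‖c - c'‖ ≤ C * (t - t') ^ (1 - 1 / p.toReal) * ‖f‖ * ‖g‖ * ‖W‖ ^ 2 *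
          max 1 T ^ (2 - 2 / p.toReal) := by
  refine ⟨4, ?_⟩
  intro d hd U hU T hT f g W t t' c c' ht'0 ht't htT hc hc'
  -- conjugate exponent facts
  have hq_ne_top : q ≠ ∞ := by
    intro h
    rw [h] at hpq
    rw [ENNReal.div_top, add_zero, one_div, ENNReal.inv_eq_one] at hpq
    exact hp.ne' hpq
  have hp0 : p ≠ 0 := (zero_lt_one.trans hp).ne'
  have hq0 : q ≠ 0 := (lt_of_lt_of_le zero_lt_one (Fact.out : 1 ≤ q)).ne'
  have hsum : 1 / p.toReal + 1 / q.toReal = 1 := by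
    have h1p : 1 / p ≠ ∞ := by simp [one_div, ENNReal.inv_ne_top, hp0]
    have h1q : 1 / q ≠ ∞ := by simp [one_div, ENNReal.inv_ne_top, hq0]
    have := congrArg ENNReal.toReal hpq
    rw [ENNReal.toReal_add h1p h1q] at this
    simpa [one_div, ENNReal.toReal_inv] using this
  have he1 : 1 - 1 / p.toReal = 1 / q.toReal := by linarith
  have he2 : 2 - 2 / p.toReal = 2 * (1 / q.toReal) := by
    rw [two_mul, ← he1]; ring
  set e : ℝ := 1 / q.toReal with hedef
  have henn : 0 ≤ e := by positivity
  rw [he1, he2]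
  -- extract the pairing data
  obtain ⟨Fre, Fim, hae, hcval⟩ := hc
  obtain ⟨Fre', Fim', hae', hcval'⟩ := hc'
  have hre : ‖Fre - Fre'‖ ≤ 2 * ‖g‖ * ‖W‖ * ‖f‖ * (t - t') ^ e * T ^ e := by
    refine aux15_component_bound hq_ne_top ht'0 ht't htT U f g W Complex.re
      (fun z => Complex.abs_re_le_norm z) (fun z₁ z₂ => Complex.sub_re z₁ z₂) Fre Fre'
      (hae.mono fun s hs => hs.imp fun w hw => ⟨hw.1, hw.2.1⟩)
      (hae'.mono fun s hs => hs.imp fun w hw => ⟨hw.1, hw.2.1⟩)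
  have him : ‖Fim - Fim'‖ ≤ 2 * ‖g‖ * ‖W‖ * ‖f‖ * (t - t') ^ e * T ^ e := by
    refine aux15_component_bound hq_ne_top ht'0 ht't htT U f g W Complex.im
      (fun z => Complex.abs_im_le_norm z) (fun z₁ z₂ => Complex.sub_im z₁ z₂) Fim Fim'
      (hae.mono fun s hs => hs.imp fun w hw => ⟨hw.1, hw.2.2⟩)
      (hae'.mono fun s hs => hs.imp fun w hw => ⟨hw.1, hw.2.2⟩)
  -- bound on `‖c - c'‖`
  have hccd : c - c' = ((W Fre - W Fre' : ℝ) : ℂ)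
      + Complex.I * ((W Fim - W Fim' : ℝ) : ℂ) := by
    rw [hcval, hcval']
    push_cast
    ring
  have habs : ‖c - c'‖ ≤ |W Fre - W Fre'| + |W Fim - W Fim'| := by
    rw [hccd]
    refine (Complex.norm_le_abs_re_add_abs_im _).trans ?_
    simp
  have hWre : |W Fre - W Fre'| ≤ ‖W‖ * ‖Fre - Fre'‖ := by
    rw [← map_sub, ← Real.norm_eq_abs]
    exact W.le_opNorm _
  have hWim : |W Fim - W Fim'| ≤ ‖W‖ * ‖Fim - Fim'‖ := by
    rw [← map_sub, ← Real.norm_eq_abs]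
    exact W.le_opNorm _
  have hkey : ‖c - c'‖ ≤ 4 * (t - t') ^ e * ‖f‖ * ‖g‖ * ‖W‖ ^ 2 * T ^ e := by
    have h1 : ‖W‖ * ‖Fre - Fre'‖ ≤ ‖W‖ * (2 * ‖g‖ * ‖W‖ * ‖f‖ * (t - t') ^ e * T ^ e) :=
      mul_le_mul_of_nonneg_left hre (norm_nonneg W)
    have h2 : ‖W‖ * ‖Fim - Fim'‖ ≤ ‖W‖ * (2 * ‖g‖ * ‖W‖ * ‖f‖ * (t - t') ^ e * T ^ e) :=
      mul_le_mul_of_nonneg_left him (norm_nonneg W)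
    have : ‖c - c'‖ ≤ ‖W‖ * (2 * ‖g‖ * ‖W‖ * ‖f‖ * (t - t') ^ e * T ^ e)
        + ‖W‖ * (2 * ‖g‖ * ‖W‖ * ‖f‖ * (t - t') ^ e * T ^ e) := by
      calc ‖c - c'‖ ≤ |W Fre - W Fre'| + |W Fim - W Fim'| := habs
        _ ≤ ‖W‖ * ‖Fre - Fre'‖ + ‖W‖ * ‖Fim - Fim'‖ := add_le_add hWre hWim
        _ ≤ _ := add_le_add h1 h2
    calc ‖c - c'‖ ≤ ‖W‖ * (2 * ‖g‖ * ‖W‖ * ‖f‖ * (t - t') ^ e * T ^ e)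
        + ‖W‖ * (2 * ‖g‖ * ‖W‖ * ‖f‖ * (t - t') ^ e * T ^ e) := this
      _ = 4 * (t - t') ^ e * ‖f‖ * ‖g‖ * ‖W‖ ^ 2 * T ^ e := by ring
  refine hkey.trans ?_
  have hTmax : T ^ e ≤ max 1 T ^ (2 * e) := by
    calc T ^ e ≤ (max 1 T) ^ e :=
          Real.rpow_le_rpow hT.le (le_max_right 1 T) henn
      _ ≤ (max 1 T) ^ (2 * e) :=
          Real.rpow_le_rpow_of_exponent_le (le_max_left 1 T) (by linarith)
  have hXnn : (0:ℝ) ≤ (t - t') ^ e := Real.rpow_nonneg (by linarith) e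
  have hpre : (0:ℝ) ≤ 4 * (t - t') ^ e * ‖f‖ * ‖g‖ * ‖W‖ ^ 2 := by positivity
  calc 4 * (t - t') ^ e * ‖f‖ * ‖g‖ * ‖W‖ ^ 2 * T ^ e
      ≤ 4 * (t - t') ^ e * ‖f‖ * ‖g‖ * ‖W‖ ^ 2 * max 1 T ^ (2 * e) :=
        mul_le_mul_of_nonneg_left hTmax hpre
    _ = 4 * (t - t') ^ e * ‖f‖ * ‖g‖ * ‖W‖ ^ 2 * max 1 T ^ (2 * e) := rfl

end
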